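/- arXiv:1907.07413 — 7 statements merged into one kernel-verified Lean document; each statement's English description precedes it below -/
import Mathlib

section
/- Let x ≥ 0, a ≥ 0, t ∈ ℝ, and let φ ∈ ℝ satisfy a·φ ≥ 0 and t − a − 2√(aφ) ≥ 0. Set d₋ := t − a − 2√(aφ), d₊ := t − a + 2√(aφ), D := −4aφ + (t−a)², and d₀ := φ + x + (t−a)/2 + √(d₋d₊)/2. If d₀ ≥ 0, then 2(t − a + √D)·x − φ² = (x − f_L)(f_R − x), where f_L := ((√d₋ + √d₊)/2 − √d₀)² and f_R := ((√d₋ + √d₊)/2 + √d₀)². -/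
theorem stmt_3 (x a t φ : ℝ) (hx : 0 ≤ x) (ha : 0 ≤ a)
    (haφ : 0 ≤ a * φ) (hd : 0 ≤ t - a - 2 * Real.sqrt (a * φ))
    (dm dp D d0 : ℝ)
    (hdm : dm = t - a - 2 * Real.sqrt (a * φ))
    (hdp : dp = t - a + 2 * Real.sqrt (a * φ))
    (hD : D = -4*a*φ + (t - a)^2)
    (hd0 : d0 = φ + x + (t - a)/2 + Real.sqrt (dm * dp)/2)
    (hd0pos : 0 ≤ d0)
    (fL fR : ℝ)
    (hfL : fL = ((Real.sqrt dm + Real.sqrt dp)/2 - Real.sqrt d0)^2)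
    (hfR : fR = ((Real.sqrt dm + Real.sqrt dp)/2 + Real.sqrt d0)^2) :
    2*(t - a + Real.sqrt D)*x - φ^2 = (x - fL)*(fR - x) := by
  have hs : 0 ≤ Real.sqrt (a * φ) := Real.sqrt_nonneg _
  have hdm0 : 0 ≤ dm := hdm ▸ hd
  have hdp0 : 0 ≤ dp := by rw [hdp]; nlinarith
  have hsq : Real.sqrt (a * φ) ^ 2 = a * φ := Real.sq_sqrt haφ
  have hDdm : D = dm * dp := by rw [hD, hdm, hdp]; nlinarith
  have hsqrtD : Real.sqrt D = Real.sqrt dm * Real.sqrt dp := by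
    rw [hDdm, Real.sqrt_mul hdm0]
  set m := Real.sqrt dm with hm
  set p := Real.sqrt dp with hp
  set v := Real.sqrt d0 with hv
  have hdm2 : m ^ 2 = dm := Real.sq_sqrt hdm0
  have hdp2 : p ^ 2 = dp := Real.sq_sqrt hdp0
  have hd02 : v ^ 2 = d0 := Real.sq_sqrt hd0pos
  have h1 : v ^ 2 = φ + x + (t - a)/2 + m * p / 2 := by
    rw [hd02, hd0, Real.sqrt_mul hdm0]
  have h2 : m ^ 2 + p ^ 2 = 2 * (t - a) := by
    rw [hdm2, hdp2, hdm, hdp]; ring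
  rw [hfL, hfR, hsqrtD]
  linear_combination (2*φ - (((m+p)/2)^2 - v^2 + φ + x)) * h1 +
    (-(2*x+φ)/2 + (((m+p)/2)^2 - v^2 + φ + x)/4) * h2
end

section
/- Let r ∈ (0,1], t > 0, and let x ∈ ℝ satisfy S(x;r,t,0) ≤ 0, equivalently x² − 2(r+1)tx + (r−1)²t² ≤ 0. Then g(x;r,t,0) = (1/4)·(x − (r−1)t + √(−3S(x;r,t,0))/t)³. -/
open Filter Topology

/-- The real cube root. -/
noncomputable def cbrt (y : ℝ) : ℝ :=
  if 0 ≤ y then y ^ ((1 : ℝ)/3) else -((-y) ^ ((1 : ℝ)/3))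

/-- The cubic polynomial `S(x; r, t, a)`. -/
noncomputable def S (x r t a : ℝ) : ℝ :=
  4*a*x^3 - (8*a^2 + 4*a*(3*r+2)*t - t^2)*x^2
    + 2*(2*a^3 - 2*a^2*(5*r-2)*t + a*(r*(6*r-1)+1)*t^2 - (r+1)*t^3)*x
    + (r-1)^2*t^2*(a^2 - a*(4*r-2)*t + t^2)

/-- The function `g(x; r, t, a)`. -/
noncomputable def g (x r t a : ℝ) : ℝ :=
  -2*x^3 + 3*((2*r+1)*t + 6*a)*x^2
    - 3*((r-1)*((2*r+1)*t - 3*a)*t - Real.sqrt (-3 * S x r t a))*x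
    + 2*(r-1)^3*t^3

/-- The function `φ(x; r, t, a)`. -/
noncomputable def phi (x r t a : ℝ) : ℝ :=
  -(2/3)*(x - (r-1)*t)
    - (cbrt 2 / 3) * ((x^2 + (3*a - (2*r+1)*t)*x + (r-1)^2*t^2) / cbrt (g x r t a))
    - cbrt (g x r t a) / (3 * cbrt 2)

/-- The function `D(x; r, t, a) = -4aφ + (t-a)²`. -/
noncomputable def Df (x r t a : ℝ) : ℝ := -4*a*phi x r t a + (t-a)^2

/-- The three-parametric Marcenko–Pastur density `ρ(x; r, t, a)`. -/
noncomputable def rho (x r t a : ℝ) : ℝ :=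
  Real.sqrt (2*(t - a + Real.sqrt (Df x r t a))*x - (phi x r t a)^2)
    / (2*Real.pi*r*t*x)

/-- The real part `R(x; r, t, a)` of the boundary value of the Green's function. -/
noncomputable def Rf (x r t a : ℝ) : ℝ :=
  (2*x + (r-1)*t)/(3*r*t*x)
    - (x^2 + (3*a - (2*r+1)*t)*x + (r-1)^2*t^2) / (3 * (cbrt 2)^2 * r * t * cbrt (g x r t a) * x)
    - cbrt (g x r t a) / (6 * cbrt 2 * r * t * x)

theorem stmt_4 (r t x : ℝ) (hr : 0 < r) (hr1 : r ≤ 1) (ht : 0 < t)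
    (hS : S x r t 0 ≤ 0) :
    g x r t 0 = (1/4) * (x - (r-1)*t + Real.sqrt (-3 * S x r t 0) / t)^3 := by
  have ht' : t ≠ 0 := ne_of_gt ht
  set s := Real.sqrt (-3 * S x r t 0) with hsdef
  have hs : s ^ 2 = -3 * S x r t 0 := Real.sq_sqrt (by linarith)
  simp only [S] at hs
  simp only [g]
  rw [← hsdef]
  have key : x - (r-1)*t + s/t = (t*(x-(r-1)*t)+s)/t := by field_simp
  rw [key, div_pow, ← mul_div_assoc, eq_div_iff (by positivity : (t:ℝ)^3 ≠ 0)]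
  linear_combination (-(3*t*(x-(r-1)*t) + s)/4) * hs
end

section
/- Let r ∈ (0,1], t > 0, and fix x with (1−√r)²t < x < (1+√r)²t. Then φ(x;r,t,0) = −x + (r−1)t. Consequently, in the definitions of Theorem 1.1 with a = 0 one has d₋ = d₊ = t and d₀ = rt, so that f_L(x;r,t,0) = (1−√r)²t and f_R(x;r,t,0) = (1+√r)²t. -/
open Filter Topology

/-- `d₋(x; r, t, a)`. -/
noncomputable def dminus (x r t a : ℝ) : ℝ := t - a - 2 * Real.sqrt (a * phi x r t a)

/-- `d₊(x; r, t, a)`. -/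
noncomputable def dplus (x r t a : ℝ) : ℝ := t - a + 2 * Real.sqrt (a * phi x r t a)

/-- `d₀(x; r, t, a)`. -/
noncomputable def dzero (x r t a : ℝ) : ℝ :=
  phi x r t a + x + (t - a)/2 + Real.sqrt (dminus x r t a * dplus x r t a)/2

/-- `f_L(x; r, t, a)`. -/
noncomputable def fL (x r t a : ℝ) : ℝ :=
  ((Real.sqrt (dminus x r t a) + Real.sqrt (dplus x r t a))/2 - Real.sqrt (dzero x r t a))^2

/-- `f_R(x; r, t, a)`. -/
noncomputable def fR (x r t a : ℝ) : ℝ :=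
  ((Real.sqrt (dminus x r t a) + Real.sqrt (dplus x r t a))/2 + Real.sqrt (dzero x r t a))^2


lemma cbrt_two_mul_cube (w : ℝ) (hw : 0 ≤ w) : cbrt (2 * w^3) = cbrt 2 * w := by
  have h2 : (0:ℝ) ≤ 2 := by norm_num
  have hw3 : (0:ℝ) ≤ w^3 := by positivity
  unfold cbrt
  rw [if_pos (by positivity), if_pos h2, Real.mul_rpow h2 hw3,
    ← Real.rpow_natCast w 3, ← Real.rpow_mul hw]
  norm_num

lemma cbrt_two_pos : 0 < cbrt 2 := by
  unfold cbrt
  rw [if_pos (by norm_num : (0:ℝ) ≤ 2)]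
  positivity

theorem stmt_6 (r t x : ℝ) (hr : 0 < r) (hr1 : r ≤ 1) (ht : 0 < t)
    (hx1 : (1 - Real.sqrt r)^2 * t < x) (hx2 : x < (1 + Real.sqrt r)^2 * t) :
    phi x r t 0 = -x + (r-1)*t
      ∧ dminus x r t 0 = t ∧ dplus x r t 0 = t ∧ dzero x r t 0 = r*t
      ∧ fL x r t 0 = (1 - Real.sqrt r)^2 * t
      ∧ fR x r t 0 = (1 + Real.sqrt r)^2 * t := by

  have hq : Real.sqrt r ^ 2 = r := Real.sq_sqrt hr.le
  have hx0 : 0 < x := lt_of_le_of_lt (by positivity) hx1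
  set sq := Real.sqrt (-3 * S x r t 0) with hsq_def
  have hsq0 : 0 ≤ sq := Real.sqrt_nonneg _
  have hSeq : -3 * S x r t 0
      = 3*t^2*((x - (1-Real.sqrt r)^2*t)*((1+Real.sqrt r)^2*t - x)) := by
    unfold S
    linear_combination ((-6)*t^4 + 3*t^4*(Real.sqrt r)^2 + 3*r*t^4 - 6*x*t^3) * hq
  have hSpos : 0 ≤ -3 * S x r t 0 := by
    rw [hSeq]
    have h1 : 0 < x - (1-Real.sqrt r)^2*t := by linarith
    have h2 : 0 < (1+Real.sqrt r)^2*t - x := by linarith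
    positivity
  have hs2 : sq^2 = 3*t^2*(-(x^2 - (2+2*r)*t*x + (1-r)^2*t^2)) := by
    rw [hsq_def, Real.sq_sqrt hSpos]
    unfold S; ring
  set A := x - (r-1)*t with hA_def
  have hA : 0 < A := by
    have h1 : (0:ℝ) ≤ (1-r)*t := mul_nonneg (by linarith) ht.le
    rw [hA_def]; linarith
  set v := (t*A + sq)/2 with hv_def
  have hv : 0 < v := by
    rw [hv_def]
    exact div_pos (add_pos_of_pos_of_nonneg (mul_pos ht hA) hsq0) two_pos
  have hgv : t^3 * g x r t 0 = 2 * v^3 := by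
    unfold g
    rw [← hsq_def, hv_def, hA_def]
    linear_combination ((-(1:ℝ)/4)*sq + (-(3:ℝ)/4)*t^2 + ((3:ℝ)/4)*r*t^2 + (-(3:ℝ)/4)*x*t) * hs2
  have htne : t ≠ 0 := ht.ne'
  have hg : g x r t 0 = 2 * (v/t)^3 := by
    have ht3 : (t:ℝ)^3 ≠ 0 := by positivity
    field_simp
    linarith [hgv]
  have hw : 0 < v/t := div_pos hv ht
  have hcbrt : cbrt (g x r t 0) = cbrt 2 * (v/t) := by
    rw [hg, cbrt_two_mul_cube _ hw.le]
  have hQf : x^2 + (3*0 - (2*r+1)*t)*x + (r-1)^2*t^2 = (x - (r-1)*t - v/t)*(v/t) := by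
    field_simp
    rw [hv_def, hA_def]
    linear_combination ((1:ℝ)/4) * hs2
  have hphi : phi x r t 0 = -x + (r-1)*t := by
    unfold phi
    rw [hcbrt, hQf]
    have hcne : cbrt 2 ≠ 0 := ne_of_gt cbrt_two_pos
    have hwne : v/t ≠ 0 := ne_of_gt hw
    field_simp
    ring
  have htt : Real.sqrt (t*t) = t := Real.sqrt_mul_self ht.le
  have hdm : dminus x r t 0 = t := by
    unfold dminus; simp
  have hdp : dplus x r t 0 = t := by
    unfold dplus; simp
  have hdz : dzero x r t 0 = r*t := by
    unfold dzero
    rw [hphi, hdm, hdp, htt]; ring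
  have hst : Real.sqrt t ^ 2 = t := Real.sq_sqrt ht.le
  have hsrt : Real.sqrt (r*t) = Real.sqrt r * Real.sqrt t := Real.sqrt_mul hr.le t
  refine ⟨hphi, hdm, hdp, hdz, ?_, ?_⟩
  · unfold fL
    rw [hdm, hdp, hdz, hsrt]
    linear_combination (1 - Real.sqrt r)^2 * hst
  · unfold fR
    rw [hdm, hdp, hdz, hsrt]
    linear_combination (1 + Real.sqrt r)^2 * hst
end

section
/- Let r ∈ (0,1], t > 0, a ≥ 0 and x > 0 with S(x;r,t,a) = 0, g(x;r,t,a) ≠ 0 and D(x;r,t,a) ≥ 0. Then 2(t − a + √(D(x;r,t,a)))·x − φ(x;r,t,a)² = 0; in particular the three-parametric Marcenko–Pastur density ρ(x;r,t,a) = √(2(t − a + √(D(x;r,t,a)))x − φ(x;r,t,a)²)/(2πrtx) vanishes at x. -/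
open Filter Topology

lemma cbrt_cube (y : ℝ) : (cbrt y)^3 = y := by
  unfold cbrt
  split
  · rename_i h
    rw [← Real.rpow_natCast (y ^ ((1:ℝ)/3)) 3, ← Real.rpow_mul h]
    norm_num
  · rename_i h
    push_neg at h
    have h' : (0:ℝ) ≤ -y := by linarith
    rw [show (-((-y) ^ ((1:ℝ)/3)))^3 = -(((-y) ^ ((1:ℝ)/3))^3) by ring,
      ← Real.rpow_natCast ((-y) ^ ((1:ℝ)/3)) 3, ← Real.rpow_mul h']
    norm_num

/-- discriminant-type identity: `G² = 4A³ - 27x²S`. -/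
lemma keyId1 (x r t a : ℝ) :
    (-2*x^3 + 3*((2*r+1)*t + 6*a)*x^2 - 3*((r-1)*((2*r+1)*t - 3*a)*t)*x + 2*(r-1)^3*t^3)^2
      = 4*(x^2 + (3*a - (2*r+1)*t)*x + (r-1)^2*t^2)^3 - 27*x^2*S x r t a := by
  unfold S; ring

set_option maxHeartbeats 2000000 in
/-- cubic-resolvent identity. -/
lemma keyId2 (x r t a : ℝ) :
    (-2*(x^2 + (3*a - (2*r+1)*t)*x + (r-1)^2*t^2)*(x - (r-1)*t)
       - (-2*x^3 + 3*((2*r+1)*t + 6*a)*x^2 - 3*((r-1)*((2*r+1)*t - 3*a)*t)*x + 2*(r-1)^3*t^3))^3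
      - 36*(x^2 + (3*a - (2*r+1)*t)*x + (r-1)^2*t^2)^2*(t-a)*x
        * (-2*(x^2 + (3*a - (2*r+1)*t)*x + (r-1)^2*t^2)*(x - (r-1)*t)
           - (-2*x^3 + 3*((2*r+1)*t + 6*a)*x^2 - 3*((r-1)*((2*r+1)*t - 3*a)*t)*x + 2*(r-1)^3*t^3))
      + 432*a*x^2*(x^2 + (3*a - (2*r+1)*t)*x + (r-1)^2*t^2)^3
    = 27*x^2*(6*(x^2 + (3*a - (2*r+1)*t)*x + (r-1)^2*t^2)*(x - (r-1)*t)
          + (-2*x^3 + 3*((2*r+1)*t + 6*a)*x^2 - 3*((r-1)*((2*r+1)*t - 3*a)*t)*x + 2*(r-1)^3*t^3))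
        * S x r t a := by
  unfold S; ring

set_option maxHeartbeats 4000000 in
theorem stmt_7 (r t a x : ℝ) (hr : 0 < r) (hr1 : r ≤ 1) (ht : 0 < t) (ha : 0 ≤ a)
    (hx : 0 < x) (hS : S x r t a = 0) (hg : g x r t a ≠ 0) (hD : 0 ≤ Df x r t a) :
    2*(t - a + Real.sqrt (Df x r t a))*x - (phi x r t a)^2 = 0 ∧ rho x r t a = 0 := by
  obtain ⟨A, hAdef⟩ : ∃ A : ℝ, A = x^2 + (3*a - (2*r+1)*t)*x + (r-1)^2*t^2 := ⟨_, rfl⟩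
  obtain ⟨Gp, hGdef⟩ : ∃ Gp : ℝ, Gp = -2*x^3 + 3*((2*r+1)*t + 6*a)*x^2
      - 3*((r-1)*((2*r+1)*t - 3*a)*t)*x + 2*(r-1)^3*t^3 := ⟨_, rfl⟩
  have hgG : g x r t a = Gp := by
    unfold g
    rw [hS, show (-3:ℝ)*0 = 0 by ring, Real.sqrt_zero, hGdef]
    ring
  have hGA : Gp^2 = 4*A^3 := by
    rw [hGdef, hAdef, keyId1 x r t a, hS]
    ring
  -- cube roots
  have h2c : (cbrt 2)^3 = 2 := cbrt_cube 2
  have h2ne : cbrt 2 ≠ 0 := by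
    intro h0; rw [h0] at h2c; norm_num at h2c
  have hc3 : (cbrt (g x r t a))^3 = g x r t a := cbrt_cube _
  have hcne : cbrt (g x r t a) ≠ 0 := by
    intro h0; rw [h0] at hc3; exact hg (by linarith [hc3])
  obtain ⟨C, hCdef⟩ : ∃ C : ℝ, C = cbrt (g x r t a) / cbrt 2 := ⟨_, rfl⟩
  have hCne : C ≠ 0 := hCdef ▸ div_ne_zero hcne h2ne
  have hC3 : C^3 = g x r t a / 2 := by
    rw [hCdef, div_pow, hc3, h2c]
  -- C² = A
  have h6 : (C^2)^3 = A^3 := by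
    rw [show (C^2)^3 = (C^3)^2 by ring, hC3, hgG]
    linear_combination (1/4) * hGA
  have hC2A : C^2 = A := by
    have hodd : Odd 3 := ⟨1, by norm_num⟩
    exact hodd.strictMono_pow (R := ℝ) |>.injective h6
  have hApos : 0 < A := by
    rw [← hC2A]; exact pow_two_pos_of_ne_zero hCne
  have hAC : A * C = g x r t a / 2 := by
    rw [← hC2A, ← hC3]; ring
  -- phi in terms of C
  have hceq : cbrt (g x r t a) = cbrt 2 * C := by
    rw [hCdef]; field_simp
  have hphi : phi x r t a = -(2/3)*(x - (r-1)*t) - (2/3)*C := by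
    unfold phi
    rw [← hAdef, ← hC2A, hceq]
    field_simp
    ring
  have hphiA : 3*A*(phi x r t a) = -2*A*(x - (r-1)*t) - Gp := by
    rw [hphi]
    linear_combination (-2)*hAC - hgG
  -- the cubic equation for phi
  have hI2 : (-2*A*(x - (r-1)*t) - Gp)^3
      - 36*A^2*(t-a)*x*(-2*A*(x - (r-1)*t) - Gp) + 432*a*x^2*A^3
      = 27*x^2*(6*A*(x - (r-1)*t) + Gp) * S x r t a := by
    rw [hAdef, hGdef]; exact keyId2 x r t a
  rw [hS, mul_zero] at hI2
  have h27 : 27*A^3*((phi x r t a)^3 - 4*(t-a)*x*(phi x r t a) + 16*a*x^2) = 0 := by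
    linear_combination ((3*A*(phi x r t a))^2
        + (3*A*(phi x r t a))*(-2*A*(x - (r-1)*t) - Gp)
        + (-2*A*(x - (r-1)*t) - Gp)^2 - 36*A^2*(t-a)*x) * hphiA + hI2
  have hcubic : (phi x r t a)^3 - 4*(t-a)*x*(phi x r t a) + 16*a*x^2 = 0 := by
    rcases mul_eq_zero.mp h27 with h | h
    · exact absurd h (by have := pow_pos hApos 3; linarith)
    · exact h
  -- squared identity
  have F1 : ((phi x r t a)^2 - 2*(t-a)*x)^2 = (2*x)^2 * (Df x r t a) := by
    unfold Df
    linear_combination (phi x r t a) * hcubic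
  have habs : |(phi x r t a)^2 - 2*(t-a)*x| = 2*x*Real.sqrt (Df x r t a) := by
    rw [← Real.sqrt_sq_eq_abs, F1, Real.sqrt_mul (by positivity), Real.sqrt_sq (by positivity)]
  -- nonnegativity of φ² - 2(t-a)x
  have hge : 0 ≤ (phi x r t a)^2 - 2*(t-a)*x := by
    rcases le_or_gt t a with hta | hta
    · have h4 : 0 ≤ (a - t)*x := mul_nonneg (by linarith) hx.le
      have h5 : 0 ≤ (phi x r t a)^2 := sq_nonneg _
      linarith
    · have hu : 0 < x - (r-1)*t := by
        have h4 : 0 ≤ (1 - r)*t := mul_nonneg (by linarith) ht.le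
        linarith
      have hCu : C^2 < (x - (r-1)*t)^2 := by
        have h3 : (x - (r-1)*t)^2 - (x^2 + (3*a - (2*r+1)*t)*x + (r-1)^2*t^2)
            = 3*(t-a)*x - 3*t*x + 3*t*x := by ring
        have h4 : 0 < (t-a)*x := mul_pos (by linarith) hx
        rw [hC2A, hAdef]
        linarith
      have hCgt : -(x - (r-1)*t) < C := by
        by_contra hcon
        push_neg at hcon
        have h5 : 0 ≤ (-(C + (x - (r-1)*t))) * ((x - (r-1)*t) - C) :=
          mul_nonneg (by linarith) (by linarith)
        have h6' : (-(C + (x - (r-1)*t))) * ((x - (r-1)*t) - C)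
            = C^2 - (x - (r-1)*t)^2 := by ring
        linarith
      have hphineg : phi x r t a < 0 := by
        rw [hphi]; linarith
      by_contra hlt
      push_neg at hlt
      have h1 : -((phi x r t a)^2 - 2*(t-a)*x) = 2*x*Real.sqrt (Df x r t a) := by
        rw [← abs_of_neg hlt, habs]
      have hDge : (t-a)^2 ≤ Df x r t a := by
        unfold Df
        have h4 : 0 ≤ a * (-(phi x r t a)) := mul_nonneg ha (by linarith)
        linarith
      have hsD : (t-a) ≤ Real.sqrt (Df x r t a) :=
        (Real.le_sqrt (by linarith) hD).mpr hDge
      have hq : 2*x*(t-a) ≤ 2*x*Real.sqrt (Df x r t a) :=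
        mul_le_mul_of_nonneg_left hsD (by linarith)
      have hps : 0 < (phi x r t a)^2 := pow_two_pos_of_ne_zero (ne_of_lt hphineg)
      linarith
  have hmain : 2*(t - a + Real.sqrt (Df x r t a))*x - (phi x r t a)^2 = 0 := by
    have h1 : (phi x r t a)^2 - 2*(t-a)*x = 2*x*Real.sqrt (Df x r t a) := by
      rw [← abs_of_nonneg hge, habs]
    linarith
  refine ⟨hmain, ?_⟩
  unfold rho
  rw [hmain, Real.sqrt_zero, zero_div]
end

section
/- Let a > 0 and 0 < t < a. Define x₋ := (8a² + 20at − t² − √t·(8a+t)^{3/2})/(8a) and x₊ := (8a² + 20at − t² + √t·(8a+t)^{3/2})/(8a). Then 0 < x₋ < x₊, and S(x;1,t,a) = 4a·x·(x − x₋)(x − x₊) for all x ∈ ℝ; in particular the three real roots of the cubic S(·;1,t,a) are 0 < x₋ < x₊, so the left and right edges of the support in Theorem 1.1 are x_L(1,t,a) = x₋ > 0 and x_R(1,t,a) = x₊. -/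
open Filter Topology

theorem stmt_10 (a t : ℝ) (ha : 0 < a) (ht : 0 < t) (hta : t < a)
    (xm xp : ℝ)
    (hxm : xm = (8*a^2 + 20*a*t - t^2 - Real.sqrt t * (8*a+t) ^ ((3:ℝ)/2))/(8*a))
    (hxp : xp = (8*a^2 + 20*a*t - t^2 + Real.sqrt t * (8*a+t) ^ ((3:ℝ)/2))/(8*a)) :
    0 < xm ∧ xm < xp
      ∧ (∀ x : ℝ, S x 1 t a = 4*a*x*(x - xm)*(x - xp))
      ∧ {x : ℝ | S x 1 t a = 0} = {0, xm, xp} := by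
  set D := Real.sqrt t * (8*a+t) ^ ((3:ℝ)/2) with hD
  have h8at : (0:ℝ) < 8*a + t := by linarith
  have hDpos : 0 < D := by
    apply mul_pos (Real.sqrt_pos.mpr ht)
    exact Real.rpow_pos_of_pos h8at _
  have hD2 : D^2 = t * (8*a+t)^3 := by
    rw [hD, mul_pow, Real.sq_sqrt ht.le, ← Real.rpow_natCast ((8*a+t) ^ ((3:ℝ)/2)) 2,
      ← Real.rpow_mul h8at.le]
    norm_num
  have hat : 0 < a - t := sub_pos.mpr hta
  have hB : (0:ℝ) < 8*a^2 + 20*a*t - t^2 := by nlinarith [mul_lt_mul_of_pos_right hta ht]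
  have hDB : D < 8*a^2 + 20*a*t - t^2 := by
    nlinarith [hD2, hDpos, hB, mul_pos (mul_pos (mul_pos ha hat) hat) hat]
  have hxm0 : 0 < xm := by
    rw [hxm]
    apply div_pos (by linarith) (by linarith)
  have hmp : xm < xp := by
    rw [hxm, hxp]
    rw [div_lt_div_iff₀ (by linarith) (by linarith)]
    nlinarith [mul_pos hDpos (show (0:ℝ) < 8*a by linarith)]
  have hsum : xm + xp = (8*a^2 + 20*a*t - t^2)/(4*a) := by
    rw [hxm, hxp]; field_simp; ring
  have hprod : xm * xp = (a-t)^3/a := by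
    rw [hxm, hxp]
    field_simp
    nlinarith [hD2]
  have hfac : ∀ x : ℝ, S x 1 t a = 4*a*x*(x - xm)*(x - xp) := by
    intro x
    have h1 : 4*a*(xm + xp) = 8*a^2 + 20*a*t - t^2 := by
      rw [hsum]; field_simp
    have h2 : 4*a*(xm * xp) = 4*(a-t)^3 := by
      rw [hprod]; field_simp
    simp only [S]
    linear_combination x^2*h1 - x*h2
  refine ⟨hxm0, hmp, hfac, ?_⟩
  ext x
  simp only [Set.mem_setOf_eq, Set.mem_insert_iff, Set.mem_singleton_iff, hfac x]
  constructor
  · intro h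
    rcases mul_eq_zero.mp h with h' | h'
    · rcases mul_eq_zero.mp h' with h'' | h''
      · rcases mul_eq_zero.mp h'' with h3 | h3
        · exfalso; nlinarith
        · exact Or.inl h3
      · exact Or.inr (Or.inl (by linarith))
    · exact Or.inr (Or.inr (by linarith))
  · rintro (rfl | rfl | rfl) <;> ring
end

section
/- Let a > 0 and, for 0 < t < a, define x_L(t) := (8a² + 20at − t² − √t·(8a+t)^{3/2})/(8a). Then lim_{t → a⁻} x_L(t)/(a − t)³ = 4/(27a²). In other words, the left edge of the support of the three-parametric Marcenko–Pastur density with r = 1 behaves as x_L(1,t,a) ≃ (4/(27a²))·(t_c(a) − t)^ν with critical exponent ν = 3 as t increases to the critical time t_c(a) = a. -/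
theorem stmt_13 (a : ℝ) (ha : 0 < a)
    (xL : ℝ → ℝ)
    (hxL : ∀ t, xL t = (8*a^2 + 20*a*t - t^2 - Real.sqrt t * (8*a+t) ^ ((3:ℝ)/2))/(8*a)) :
    Filter.Tendsto (fun t : ℝ => xL t / (a - t)^3)
      (nhdsWithin a (Set.Ioo 0 a)) (nhds (4/(27*a^2))) := by
  set g : ℝ → ℝ := fun t =>
    8 / (8*a^2 + 20*a*t - t^2 + Real.sqrt t * (8*a+t) ^ ((3:ℝ)/2)) with hg
  have hconj : ∀ t ∈ Set.Ioo (0:ℝ) a, g t = xL t / (a - t)^3 := by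
    intro t ht
    obtain ⟨ht0, hta⟩ := ht
    have h8 : (0:ℝ) < 8*a + t := by linarith
    set B := Real.sqrt t * (8*a+t) ^ ((3:ℝ)/2) with hBdef
    have hB2 : B^2 = t * (8*a+t)^3 := by
      have h1 : (Real.sqrt t)^2 = t := Real.sq_sqrt ht0.le
      have h2 : ((8*a+t) ^ ((3:ℝ)/2))^2 = (8*a+t)^3 := by
        rw [← Real.rpow_natCast ((8*a+t) ^ ((3:ℝ)/2)) 2, ← Real.rpow_mul h8.le]
        have : ((3:ℝ)/2) * ((2:ℕ):ℝ) = ((3:ℕ):ℝ) := by norm_num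
        rw [this, Real.rpow_natCast]
      calc B^2 = (Real.sqrt t)^2 * ((8*a+t) ^ ((3:ℝ)/2))^2 := by ring
        _ = t * (8*a+t)^3 := by rw [h1, h2]
    have hBnn : 0 ≤ B := mul_nonneg (Real.sqrt_nonneg t) (Real.rpow_nonneg h8.le _)
    have hA : 0 < 8*a^2 + 20*a*t - t^2 := by nlinarith
    have hden : (0:ℝ) < 8*a^2 + 20*a*t - t^2 + B := by linarith
    have hat : (0:ℝ) < (a - t)^3 := pow_pos (by linarith) 3
    rw [hxL, hg]
    simp only
    rw [← hBdef, div_div]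
    rw [div_eq_div_iff hden.ne' (by positivity : ((8:ℝ)*a) * (a-t)^3 ≠ 0)]
    linear_combination hB2
  have hEq : g =ᶠ[nhdsWithin a (Set.Ioo 0 a)] (fun t => xL t / (a - t)^3) := by
    filter_upwards [self_mem_nhdsWithin] with t ht using hconj t ht
  refine Filter.Tendsto.congr' hEq ?_
  have hcont : ContinuousAt
      (fun t : ℝ => 8*a^2 + 20*a*t - t^2 + Real.sqrt t * (8*a+t) ^ ((3:ℝ)/2)) a := by
    have h1 : ContinuousAt (fun t : ℝ => (8*a+t) ^ ((3:ℝ)/2)) a := by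
      have : ContinuousAt (fun x : ℝ => x ^ ((3:ℝ)/2)) (8*a+a) :=
        Real.continuousAt_rpow_const _ _ (Or.inl (by positivity))
      exact this.comp (by fun_prop)
    have h2 : ContinuousAt Real.sqrt a := Real.continuous_sqrt.continuousAt
    fun_prop
  have hval : Real.sqrt a * (8*a+a) ^ ((3:ℝ)/2) = 27*a^2 := by
    have h9 : (0:ℝ) < 8*a + a := by linarith
    have hL : 0 ≤ Real.sqrt a * (8*a+a) ^ ((3:ℝ)/2) :=
      mul_nonneg (Real.sqrt_nonneg a) (Real.rpow_nonneg h9.le _)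
    have hsq : (Real.sqrt a * (8*a+a) ^ ((3:ℝ)/2))^2 = (27*a^2)^2 := by
      have h1 : (Real.sqrt a)^2 = a := Real.sq_sqrt ha.le
      have h2 : ((8*a+a) ^ ((3:ℝ)/2))^2 = (8*a+a)^3 := by
        rw [← Real.rpow_natCast ((8*a+a) ^ ((3:ℝ)/2)) 2, ← Real.rpow_mul h9.le]
        have : ((3:ℝ)/2) * ((2:ℕ):ℝ) = ((3:ℕ):ℝ) := by norm_num
        rw [this, Real.rpow_natCast]
      calc (Real.sqrt a * (8*a+a) ^ ((3:ℝ)/2))^2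
          = (Real.sqrt a)^2 * ((8*a+a) ^ ((3:ℝ)/2))^2 := by ring
        _ = (27*a^2)^2 := by rw [h1, h2]; ring
    calc Real.sqrt a * (8*a+a) ^ ((3:ℝ)/2)
        = Real.sqrt ((Real.sqrt a * (8*a+a) ^ ((3:ℝ)/2))^2) := (Real.sqrt_sq hL).symm
      _ = Real.sqrt ((27*a^2)^2) := by rw [hsq]
      _ = 27*a^2 := Real.sqrt_sq (by positivity)
  have hD : Filter.Tendsto
      (fun t : ℝ => 8*a^2 + 20*a*t - t^2 + Real.sqrt t * (8*a+t) ^ ((3:ℝ)/2))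
      (nhdsWithin a (Set.Ioo 0 a)) (nhds (54*a^2)) := by
    have h := hcont.tendsto.mono_left (nhdsWithin_le_nhds (s := Set.Ioo 0 a))
    convert h using 2
    rw [hval]; ring
  have h54 : (54:ℝ)*a^2 ≠ 0 := by positivity
  have hlim := Filter.Tendsto.div (tendsto_const_nhds (x := (8:ℝ))) hD h54
  have : (4:ℝ)/(27*a^2) = 8/(54*a^2) := by
    field_simp; ring
  rw [hg, this]
  exact hlim
end

section
/- Let a > 0 and set r = 1, t = a (the critical time t_c(a) = a). Then lim_{x → 0⁺} x^{1/3}·ρ(x;1,a,a) = (√3/(2π))·a^{−2/3}, i.e. the three-parametric Marcenko–Pastur density at the critical time diverges as ρ(x;1,a,a) ≃ (√3/(2π))·a^{−2/3}·x^{−1/3} as x → 0⁺. -/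
open Filter Topology

lemma cbrt_of_nonneg {y : ℝ} (hy : 0 ≤ y) : cbrt y = y ^ ((1:ℝ)/3) := if_pos hy

lemma cbrt_pos {y : ℝ} (hy : 0 < y) : 0 < cbrt y := by
  rw [cbrt_of_nonneg hy.le]; exact Real.rpow_pos_of_pos hy _

lemma cbrt_mul_nonneg {x y : ℝ} (hx : 0 ≤ x) (hy : 0 ≤ y) :
    cbrt (x*y) = cbrt x * cbrt y := by
  rw [cbrt_of_nonneg (mul_nonneg hx hy), cbrt_of_nonneg hx, cbrt_of_nonneg hy,
    Real.mul_rpow hx hy]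

lemma cbrt_pow6 {u : ℝ} (hu : 0 ≤ u) : cbrt (u^6) = u^2 := by
  rw [cbrt_of_nonneg (by positivity), ← Real.rpow_natCast u 6, ← Real.rpow_natCast u 2,
    ← Real.rpow_mul hu]
  norm_num

lemma continuousAt_cbrt_pos {y : ℝ} (hy : 0 < y) : ContinuousAt cbrt y := by
  have h : (fun z : ℝ => z ^ ((1:ℝ)/3)) =ᶠ[nhds y] cbrt := by
    filter_upwards [eventually_gt_nhds hy] with z hz
    rw [cbrt_of_nonneg hz.le]
  exact (Real.continuousAt_rpow_const y _ (Or.inl hy.ne')).congr h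

/-- `g(u³;1,a,a) / u⁶`. -/
noncomputable def Gu (a u : ℝ) : ℝ := 27*a - 2*u^3 + 3*Real.sqrt (3*a*(27*a - 4*u^3))

/-- `φ(u³;1,a,a) / u²`. -/
noncomputable def Pu (a u : ℝ) : ℝ :=
  -(2/3)*u - (cbrt 2/3) * u^2 / cbrt (Gu a u) - cbrt (Gu a u)/(3*cbrt 2)

/-- `u · ρ(u³;1,a,a)` as a nice function of `u`. -/
noncomputable def Fu (a u : ℝ) : ℝ :=
  Real.sqrt (2*Real.sqrt (-4*a*Pu a u) - (Pu a u)^2)/(2*Real.pi*a)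

lemma Gu_pos {a u : ℝ} (ha : 0 < a) (hua : u^3 < a) : 0 < Gu a u := by
  have h := Real.sqrt_nonneg (3*a*(27*a - 4*u^3))
  unfold Gu; nlinarith

lemma main_eq {a u : ℝ} (ha : 0 < a) (hu : 0 < u) (hua : u^3 < a) :
    u * rho (u^3) 1 a a = Fu a u := by
  have hG : 0 < Gu a u := Gu_pos ha hua
  have hc : (0:ℝ) < cbrt (Gu a u) := cbrt_pos hG
  have hc2 : (0:ℝ) < cbrt 2 := cbrt_pos (by norm_num)
  have hS : -3 * S (u^3) 1 a a = u^6 * (3*a*(27*a - 4*u^3)) := by unfold S; ring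
  have hsq6 : Real.sqrt (u^6) = u^3 := by
    rw [show u^6 = (u^3)^2 by ring, Real.sqrt_sq (by positivity)]
  have hsqS : Real.sqrt (-3 * S (u^3) 1 a a) = u^3 * Real.sqrt (3*a*(27*a - 4*u^3)) := by
    rw [hS, Real.sqrt_mul (by positivity), hsq6]
  have hg : g (u^3) 1 a a = u^6 * Gu a u := by
    unfold g Gu; rw [hsqS]; ring
  have hcg : cbrt (g (u^3) 1 a a) = u^2 * cbrt (Gu a u) := by
    rw [hg, cbrt_mul_nonneg (by positivity) hG.le, cbrt_pow6 hu.le]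
  have hphi : phi (u^3) 1 a a = u^2 * Pu a u := by
    unfold phi Pu
    rw [hcg]
    field_simp
    ring
  have hDf : Df (u^3) 1 a a = u^2 * (-4*a*Pu a u) := by
    unfold Df; rw [hphi]; ring
  have hsqD : Real.sqrt (Df (u^3) 1 a a) = u * Real.sqrt (-4*a*Pu a u) := by
    rw [hDf, Real.sqrt_mul (sq_nonneg u), Real.sqrt_sq hu.le]
  have hin : 2*(a - a + Real.sqrt (Df (u^3) 1 a a))*(u^3) - (phi (u^3) 1 a a)^2
      = u^4 * (2*Real.sqrt (-4*a*Pu a u) - (Pu a u)^2) := by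
    rw [hsqD, hphi]; ring
  have hsqin : Real.sqrt (u^4 * (2*Real.sqrt (-4*a*Pu a u) - (Pu a u)^2))
      = u^2 * Real.sqrt (2*Real.sqrt (-4*a*Pu a u) - (Pu a u)^2) := by
    rw [Real.sqrt_mul (by positivity), show u^4 = (u^2)^2 by ring,
      Real.sqrt_sq (by positivity)]
  unfold rho Fu
  rw [hin, hsqin]
  have hpi : (0:ℝ) < Real.pi := Real.pi_pos
  field_simp

lemma Gu_zero {a : ℝ} (ha : 0 < a) : Gu a 0 = 54*a := by
  unfold Gu
  have : 3*a*(27*a - 4*0^3) = (9*a)^2 := by ring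
  rw [this, Real.sqrt_sq (by positivity)]; ring

lemma cbrt27 : cbrt 27 = 3 := by
  rw [cbrt_of_nonneg (by norm_num), show (27:ℝ) = 3^(3:ℕ) by norm_num,
    ← Real.rpow_natCast 3 3, ← Real.rpow_mul (by norm_num)]
  norm_num

lemma Pu_zero {a : ℝ} (ha : 0 < a) : Pu a 0 = -(a ^ ((1:ℝ)/3)) := by
  have hc2 : (0:ℝ) < cbrt 2 := cbrt_pos (by norm_num)
  have h54 : cbrt (Gu a 0) = cbrt 2 * (3 * a ^ ((1:ℝ)/3)) := by
    rw [Gu_zero ha, show (54:ℝ)*a = 2*(27*a) by ring,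
      cbrt_mul_nonneg (by norm_num) (by positivity),
      cbrt_mul_nonneg (by norm_num) ha.le, cbrt27, cbrt_of_nonneg ha.le]
  unfold Pu
  rw [h54]
  field_simp
  ring

lemma Fu_zero {a : ℝ} (ha : 0 < a) :
    Fu a 0 = (Real.sqrt 3 / (2*Real.pi)) * a ^ (-(2:ℝ)/3) := by
  have h13 : (0:ℝ) < a ^ ((1:ℝ)/3) := Real.rpow_pos_of_pos ha _
  have h23 : (0:ℝ) < a ^ ((2:ℝ)/3) := Real.rpow_pos_of_pos ha _
  have hsq1 : -4*a*Pu a 0 = (2 * a ^ ((2:ℝ)/3))^2 := by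
    rw [Pu_zero ha]
    have : a ^ ((2:ℝ)/3) * a ^ ((2:ℝ)/3) = a * a ^ ((1:ℝ)/3) := by
      rw [← Real.rpow_add ha, show a * a^((1:ℝ)/3) = a^(1:ℝ)*a^((1:ℝ)/3) by rw [Real.rpow_one],
        ← Real.rpow_add ha]
      norm_num
    nlinarith [this]
  have hsq2 : (Pu a 0)^2 = a ^ ((2:ℝ)/3) := by
    rw [Pu_zero ha, neg_sq, ← Real.rpow_natCast (a ^ ((1:ℝ)/3)) 2,
      ← Real.rpow_mul ha.le]
    norm_num
  unfold Fu
  rw [hsq1, Real.sqrt_sq (by positivity), hsq2,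
    show 2*(2 * a ^ ((2:ℝ)/3)) - a ^ ((2:ℝ)/3) = 3 * a ^ ((2:ℝ)/3) by ring,
    Real.sqrt_mul (by norm_num)]
  have : Real.sqrt (a ^ ((2:ℝ)/3)) = a ^ ((1:ℝ)/3) := by
    rw [Real.sqrt_eq_rpow, ← Real.rpow_mul ha.le]; norm_num
  rw [this]
  have hne : a ≠ 0 := ha.ne'
  have hm : a ^ (-(2:ℝ)/3) = a ^ ((1:ℝ)/3) / a := by
    rw [show (-(2:ℝ)/3) = (1:ℝ)/3 - 1 by norm_num, Real.rpow_sub ha, Real.rpow_one]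
  rw [hm]
  have hpi : Real.pi ≠ 0 := Real.pi_ne_zero
  field_simp

lemma Fu_cont {a : ℝ} (ha : 0 < a) : ContinuousAt (Fu a) 0 := by
  have hG0 : 0 < Gu a 0 := by rw [Gu_zero ha]; positivity
  have hGcont : ContinuousAt (Gu a) 0 := by
    unfold Gu
    fun_prop
  have hccont : ContinuousAt (fun u => cbrt (Gu a u)) 0 :=
    (continuousAt_cbrt_pos hG0).comp hGcont
  have hcne : cbrt (Gu a 0) ≠ 0 := (cbrt_pos hG0).ne'
  have hc2ne : (3 : ℝ) * cbrt 2 ≠ 0 := by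
    have := cbrt_pos (show (0:ℝ) < 2 by norm_num); positivity
  have h1 : ContinuousAt (fun u : ℝ => -(2/3)*u) 0 := by fun_prop
  have h2 : ContinuousAt (fun u : ℝ => cbrt 2/3 * u^2) 0 := by fun_prop
  have hPcont : ContinuousAt (Pu a) 0 := by
    unfold Pu
    exact (h1.sub ((h2.div hccont hcne))).sub (hccont.div continuousAt_const hc2ne)
  have hs1 : ContinuousAt (fun u => Real.sqrt (-4*a*Pu a u)) 0 :=
    (continuousAt_const.mul hPcont).sqrt
  have hs2 : ContinuousAt (fun u => 2*Real.sqrt (-4*a*Pu a u) - (Pu a u)^2) 0 :=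
    (continuousAt_const.mul hs1).sub (hPcont.pow 2)
  unfold Fu
  exact hs2.sqrt.div continuousAt_const (by positivity)

theorem stmt_14 (a : ℝ) (ha : 0 < a) :
    Filter.Tendsto (fun x : ℝ => x ^ ((1:ℝ)/3) * rho x 1 a a)
      (nhdsWithin 0 (Set.Ioi 0))
      (nhds ((Real.sqrt 3 / (2*Real.pi)) * a ^ (-(2:ℝ)/3))) := by
  have hlim : Filter.Tendsto (fun x : ℝ => x ^ ((1:ℝ)/3)) (nhdsWithin 0 (Set.Ioi 0)) (nhds 0) := by
    have h := (Real.continuousAt_rpow_const 0 ((1:ℝ)/3)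
      (Or.inr (by norm_num))).tendsto.mono_left (nhdsWithin_le_nhds (s := Set.Ioi 0))
    rwa [Real.zero_rpow (by norm_num)] at h
  have hcomp : Filter.Tendsto (fun x : ℝ => Fu a (x ^ ((1:ℝ)/3)))
      (nhdsWithin 0 (Set.Ioi 0)) (nhds (Fu a 0)) := (Fu_cont ha).tendsto.comp hlim
  rw [show (Real.sqrt 3 / (2*Real.pi)) * a ^ (-(2:ℝ)/3) = Fu a 0 from (Fu_zero ha).symm]
  refine hcomp.congr' ?_
  filter_upwards [Ioo_mem_nhdsGT_of_mem (Set.left_mem_Ico.mpr ha)] with x hx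
  have hu : 0 < x ^ ((1:ℝ)/3) := Real.rpow_pos_of_pos hx.1 _
  have hu3 : (x ^ ((1:ℝ)/3))^3 = x := by
    rw [← Real.rpow_natCast (x ^ ((1:ℝ)/3)) 3, ← Real.rpow_mul hx.1.le]
    norm_num
  have h := main_eq ha hu (by rw [hu3]; exact hx.2)
  rw [hu3] at h
  exact h.symm
end
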